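/- Let (Z_t)_{t≥0} be a finite-state Markov chain with stationary distribution d_Z and let g : Z → R^d satisfy ∫ g d(d_Z) = 0 and ‖g(z)‖ ≤ σ for all z. Suppose the cumulative total-variation deviation satisfies ∑_{t=0}^{T−1} ‖P^t(z,·) − d_Z‖_TV ≤ C₁ for all z and T. Then for all N ≥ 1, E‖(1/N)∑_{t=0}^{N−1} g(Z_t)‖² ≤ 16 C₁² σ² / N. -/

import Mathlib

open MeasureTheory
open scoped BigOperators

set_option linter.unusedSectionVars false
set_option maxHeartbeats 1000000

section aux
variable {d : ℕ} {S : Type*} [Fintype S] [DecidableEq S] [MeasurableSpace S]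
    [MeasurableSingletonClass S]
    {Ω : Type*} {m : MeasurableSpace Ω} {μ : Measure Ω} [IsProbabilityMeasure μ]

lemma aux_sm {E : Type*} [NormedAddCommGroup E] [MeasurableSpace E] [BorelSpace E]
    [SecondCountableTopology E]
    (f : S → E) {Zt : Ω → S} (hZ : Measurable Zt) :
    StronglyMeasurable (fun ω => f (Zt ω)) :=
  ((measurable_of_countable f).comp hZ).stronglyMeasurable

lemma aux_int {E : Type*} [NormedAddCommGroup E] [MeasurableSpace E] [BorelSpace E]
    [SecondCountableTopology E]
    (f : S → E) {Zt : Ω → S} (hZ : Measurable Zt) :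
    Integrable (fun ω => f (Zt ω)) μ := by
  refine Integrable.mono' (integrable_const (∑ z, ‖f z‖)) (aux_sm f hZ).aestronglyMeasurable
    (ae_of_all _ fun ω => ?_)
  exact Finset.single_le_sum (fun z _ => norm_nonneg (f z)) (Finset.mem_univ (Zt ω))

lemma aux_markov_pow (P : Matrix S S ℝ)
    (F : Filtration ℕ m) (Z : ℕ → Ω → S)
    (hadapted : ∀ t, Measurable[F t] (Z t))
    (hmarkov : ∀ (t : ℕ) (f : S → EuclideanSpace ℝ (Fin d)),
      μ[(fun ω => f (Z (t+1) ω)) | F t] =ᵐ[μ] fun ω => ∑ u, P (Z t ω) u • f u)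
    (s k : ℕ) (f : S → EuclideanSpace ℝ (Fin d)) :
    μ[(fun ω => f (Z (s+k) ω)) | F s] =ᵐ[μ] fun ω => ∑ u, (P ^ k) (Z s ω) u • f u := by
  haveI : SigmaFinite (μ.trim (F.le s)) := by
    have : IsFiniteMeasure (μ.trim (F.le s)) := isFiniteMeasure_trim (F.le s)
    infer_instance
  induction k generalizing f with
  | zero =>
    have h1 : (fun ω => ∑ u, (P ^ 0) (Z s ω) u • f u) = fun ω => f (Z s ω) := by
      funext ω
      simp [Matrix.one_apply, ite_smul]
    rw [h1]
    have hsm : StronglyMeasurable[F s] (fun ω => f (Z s ω)) :=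
      ((measurable_of_countable f).comp (hadapted s)).stronglyMeasurable
    exact Filter.EventuallyEq.of_eq (condExp_of_stronglyMeasurable (μ := μ) (F.le s) hsm
      (aux_int f ((hadapted s).mono (F.le s) le_rfl)))
  | succ k ih =>
    have hle : F s ≤ F (s + k) := F.mono (Nat.le_add_right s k)
    have htower := (condExp_condExp_of_le hle (F.le (s + k))
      (f := fun ω => f (Z (s + k + 1) ω)) (μ := μ)).symm
    have h1 := condExp_congr_ae (m := F s) (μ := μ) (hmarkov (s + k) f)
    set f' : S → EuclideanSpace ℝ (Fin d) := fun z => ∑ u, P z u • f u with hf'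
    have h2 : (fun ω => ∑ u, P (Z (s + k) ω) u • f u) = fun ω => f' (Z (s + k) ω) := rfl
    have h3 := ih f'
    have h4 : (fun ω => ∑ u, (P ^ k) (Z s ω) u • f' u)
        = fun ω => ∑ u, (P ^ (k + 1)) (Z s ω) u • f u := by
      funext ω
      have : ∀ z : S, ∑ u, (P ^ k) z u • f' u = ∑ u, (P ^ (k + 1)) z u • f u := by
        intro z
        simp only [hf', Finset.smul_sum, smul_smul, pow_succ, Matrix.mul_apply,
          Finset.sum_smul]
        exact Finset.sum_comm
      exact this (Z s ω)
    have : (fun ω => f (Z (s + (k + 1)) ω)) = fun ω => f (Z (s + k + 1) ω) := rfl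
    rw [this]
    calc μ[(fun ω => f (Z (s + k + 1) ω)) | F s]
        =ᵐ[μ] μ[μ[(fun ω => f (Z (s + k + 1) ω)) | F (s+k)] | F s] := htower
      _ =ᵐ[μ] μ[(fun ω => f' (Z (s + k) ω)) | F s] := by rw [← h2]; exact h1
      _ =ᵐ[μ] fun ω => ∑ u, (P ^ (k + 1)) (Z s ω) u • f u := h4 ▸ h3


open RealInnerProductSpace in
lemma aux_key (P : Matrix S S ℝ)
    (F : Filtration ℕ m) (Z : ℕ → Ω → S)
    (hadapted : ∀ t, Measurable[F t] (Z t))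
    (hmarkov : ∀ (t : ℕ) (f : S → EuclideanSpace ℝ (Fin d)),
      μ[(fun ω => f (Z (t+1) ω)) | F t] =ᵐ[μ] fun ω => ∑ u, P (Z t ω) u • f u)
    (g : S → EuclideanSpace ℝ (Fin d)) (s k : ℕ) :
    ∫ ω, ⟪g (Z s ω), g (Z (s+k) ω)⟫ ∂μ
      = ∑ z, (μ (Z s ⁻¹' {z})).toReal * ⟪g z, ∑ u, (P ^ k) z u • g u⟫ := by
  have hZm : ∀ t, Measurable (Z t) := fun t => (hadapted t).mono (F.le t) le_rfl
  have hYint : Integrable (fun ω => g (Z (s+k) ω)) μ := aux_int g (hZm (s+k))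
  have hA : ∀ z : S, MeasurableSet (Z s ⁻¹' {z}) :=
    fun z => (hZm s) (measurableSet_singleton z)
  have hAF : ∀ z : S, MeasurableSet[F s] (Z s ⁻¹' {z}) :=
    fun z => (hadapted s) (measurableSet_singleton z)
  have hpt : ∀ ω, ⟪g (Z s ω), g (Z (s+k) ω)⟫
      = ∑ z, Set.indicator (Z s ⁻¹' {z}) (fun ω' => ⟪g z, g (Z (s+k) ω')⟫) ω := by
    intro ω
    rw [Finset.sum_eq_single_of_mem (Z s ω) (Finset.mem_univ _)]
    · rw [Set.indicator_of_mem (by simp : ω ∈ Z s ⁻¹' {Z s ω})]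
    · intro z _ hz
      exact Set.indicator_of_notMem (by simp [Ne.symm hz]) _
  have hind_int : ∀ z : S, Integrable
      ((Z s ⁻¹' {z}).indicator (fun ω' => ⟪g z, g (Z (s+k) ω')⟫)) μ :=
    fun z => (hYint.const_inner (g z)).indicator (hA z)
  calc ∫ ω, ⟪g (Z s ω), g (Z (s+k) ω)⟫ ∂μ
      = ∫ ω, ∑ z, Set.indicator (Z s ⁻¹' {z}) (fun ω' => ⟪g z, g (Z (s+k) ω')⟫) ω ∂μ := by
        simp_rw [← hpt]
    _ = ∑ z, ∫ ω in Z s ⁻¹' {z}, ⟪g z, g (Z (s+k) ω)⟫ ∂μ := by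
        rw [integral_finset_sum _ (fun z _ => hind_int z)]
        exact Finset.sum_congr rfl fun z _ => integral_indicator (hA z)
    _ = ∑ z, (μ (Z s ⁻¹' {z})).toReal * ⟪g z, ∑ u, (P ^ k) z u • g u⟫ := by
        refine Finset.sum_congr rfl fun z _ => ?_
        rw [integral_inner (hYint.restrict (s := Z s ⁻¹' {z}))]
        have e1 : ∫ ω in Z s ⁻¹' {z}, g (Z (s+k) ω) ∂μ
            = (μ (Z s ⁻¹' {z})).toReal • (∑ u, (P ^ k) z u • g u) := by
          rw [← setIntegral_condExp (F.le s) hYint (hAF z)]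
          rw [setIntegral_congr_ae (hA z)
            ((aux_markov_pow P F Z hadapted hmarkov s k g).mono fun ω h _ => h)]
          rw [setIntegral_congr_fun (hA z)
            (fun ω hω => by simp only [Set.mem_preimage, Set.mem_singleton_iff] at hω; rw [hω])]
          simp [Measure.restrict_apply_univ]; rfl
        rw [e1, real_inner_smul_right]

end aux


open RealInnerProductSpace

/-- MSE of the Markovian sample average for a unichain-type
chain: if g is mean-zero and bounded by σ and cumulative TV deviation is
bounded by C₁, then E‖(1/N)∑_{t<N} g(Z_t)‖² ≤ 16C₁²σ²/N. -/
theorem stmt_5 {d : ℕ} {S : Type*} [Fintype S] [DecidableEq S] [MeasurableSpace S]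
    [MeasurableSingletonClass S]
    {Ω : Type*} {m : MeasurableSpace Ω} (μ : Measure Ω) [IsProbabilityMeasure μ]
    (P : Matrix S S ℝ) (hP : ∀ z, (∀ u, 0 ≤ P z u) ∧ ∑ u, P z u = 1)
    (dZ : S → ℝ) (hd : (∀ z, 0 ≤ dZ z) ∧ ∑ z, dZ z = 1)
    (hstat : ∀ u, ∑ z, dZ z * P z u = dZ u)
    (F : Filtration ℕ m) (Z : ℕ → Ω → S)
    (hadapted : ∀ t, Measurable[F t] (Z t))
    (hmarkov : ∀ (t : ℕ) (f : S → EuclideanSpace ℝ (Fin d)),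
      μ[(fun ω => f (Z (t+1) ω)) | F t] =ᵐ[μ] fun ω => ∑ u, P (Z t ω) u • f u)
    (g : S → EuclideanSpace ℝ (Fin d)) (σ C₁ : ℝ) (hσ : 0 ≤ σ) (hC : 0 < C₁)
    (hmean : ∑ z, dZ z • g z = 0) (hgb : ∀ z, ‖g z‖ ≤ σ)
    (hTV : ∀ z (T : ℕ),
      ∑ t ∈ Finset.range T, (1/2 : ℝ) * ∑ u, |(P ^ t) z u - dZ u| ≤ C₁)
    (N : ℕ) (hN : 1 ≤ N) :
    ∫ ω, ‖(N:ℝ)⁻¹ • ∑ t ∈ Finset.range N, g (Z t ω)‖^2 ∂μ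
      ≤ 16 * C₁^2 * σ^2 / N := by
  classical
  have hNpos : (0:ℝ) < N := by exact_mod_cast hN
  have hRHS0 : (0:ℝ) ≤ 16 * C₁^2 * σ^2 / N := by positivity
  by_cases hhalf : ∃ z₀ : S, dZ z₀ ≤ 1/2
  swap
  · -- degenerate case: all dZ z > 1/2, hence S is a subsingleton and g ≡ 0
    push_neg at hhalf
    have hsub : ∀ z w : S, z = w := by
      intro z w
      by_contra hzw
      have h1 : dZ z + dZ w ≤ ∑ v, dZ v := by
        rw [← Finset.sum_pair hzw]
        exact Finset.sum_le_sum_of_subset_of_nonneg (Finset.subset_univ _)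
          (fun v _ _ => hd.1 v)
      rw [hd.2] at h1
      have := hhalf z
      have := hhalf w
      linarith
    have hgz : ∀ z : S, g z = 0 := by
      intro z
      have h1 : ∑ w, dZ w • g w = dZ z • g z := by
        refine Finset.sum_eq_single_of_mem z (Finset.mem_univ z) fun w _ hw => ?_
        exact absurd (hsub w z) hw
      have h2 : dZ z = 1 := by
        have := hd.2
        rw [Finset.sum_eq_single_of_mem z (Finset.mem_univ z)
          (fun w _ hw => absurd (hsub w z) hw)] at this
        exact this
      rw [hmean, h2, one_smul] at h1
      exact h1.symm
    have : ∀ ω, ‖(N:ℝ)⁻¹ • ∑ t ∈ Finset.range N, g (Z t ω)‖^2 = 0 := by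
      intro ω; simp [hgz]
    simp only [this, integral_zero]
    exact hRHS0
  obtain ⟨z₀, hz₀⟩ := hhalf
  -- C₁ ≥ 1/2
  have hC12 : (1:ℝ)/2 ≤ C₁ := by
    have h1 := hTV z₀ 1
    have hdle : ∀ z, dZ z ≤ 1 := by
      intro z
      calc dZ z ≤ ∑ v, dZ v :=
        Finset.single_le_sum (fun v _ => hd.1 v) (Finset.mem_univ z)
      _ = 1 := hd.2
    have h2 : ∑ u, |(P ^ 0) z₀ u - dZ u| = 2 * (1 - dZ z₀) := by
      rw [← Finset.add_sum_erase _ _ (Finset.mem_univ z₀)]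
      have e1 : |(P ^ 0) z₀ z₀ - dZ z₀| = 1 - dZ z₀ := by
        rw [pow_zero, Matrix.one_apply_eq, abs_of_nonneg (by linarith [hdle z₀])]
      have e2 : ∑ u ∈ Finset.univ.erase z₀, |(P ^ 0) z₀ u - dZ u|
          = ∑ u ∈ Finset.univ.erase z₀, dZ u := by
        refine Finset.sum_congr rfl fun u hu => ?_
        have hu' : u ≠ z₀ := Finset.ne_of_mem_erase hu
        rw [pow_zero, Matrix.one_apply_ne (Ne.symm hu')]
        rw [abs_of_nonpos (by linarith [hd.1 u])]
        ring
      have e3 : ∑ u ∈ Finset.univ.erase z₀, dZ u = 1 - dZ z₀ := by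
        rw [Finset.sum_erase_eq_sub (Finset.mem_univ z₀), hd.2]
      rw [e1, e2, e3]; ring
    rw [Finset.sum_range_one, h2] at h1
    linarith
  -- setup
  have hZm : ∀ t, Measurable (Z t) := fun t => (hadapted t).mono (F.le t) le_rfl
  set c : ℕ → ℕ → ℝ := fun s t => ∫ ω, ⟪g (Z s ω), g (Z t ω)⟫ ∂μ with hc
  have hcint : ∀ s t : ℕ, Integrable (fun ω => ⟪g (Z s ω), g (Z t ω)⟫) μ := by
    intro s t
    exact aux_int (S := S × S) (fun p => ⟪g p.1, g p.2⟫) ((hZm s).prodMk (hZm t))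
  have hcsymm : ∀ s t, c s t = c t s := by
    intro s t; simp only [hc]
    congr 1; funext ω; exact real_inner_comm _ _
  have hcdiag : ∀ s, 0 ≤ c s s :=
    fun s => integral_nonneg fun ω => real_inner_self_nonneg
  -- bound on the "Poisson" sums
  have hW : ∀ (z : S) (T : ℕ),
      ∑ k ∈ Finset.range T, ‖∑ u, (P ^ k) z u • g u‖ ≤ 2 * σ * C₁ := by
    intro z T
    have h1 : ∀ k : ℕ, ‖∑ u, (P ^ k) z u • g u‖
        ≤ 2 * σ * ((1/2 : ℝ) * ∑ u, |(P ^ k) z u - dZ u|) := by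
      intro k
      have e0 : ∑ u, (P ^ k) z u • g u = ∑ u, ((P ^ k) z u - dZ u) • g u := by
        simp only [sub_smul, Finset.sum_sub_distrib, hmean, sub_zero]
      rw [e0]
      calc ‖∑ u, ((P ^ k) z u - dZ u) • g u‖
          ≤ ∑ u, ‖((P ^ k) z u - dZ u) • g u‖ := norm_sum_le _ _
        _ = ∑ u, |(P ^ k) z u - dZ u| * ‖g u‖ := by
            refine Finset.sum_congr rfl fun u _ => ?_
            rw [norm_smul, Real.norm_eq_abs]
        _ ≤ ∑ u, |(P ^ k) z u - dZ u| * σ :=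
            Finset.sum_le_sum fun u _ =>
              mul_le_mul_of_nonneg_left (hgb u) (abs_nonneg _)
        _ = 2 * σ * ((1/2 : ℝ) * ∑ u, |(P ^ k) z u - dZ u|) := by
            rw [← Finset.sum_mul]; ring
    calc ∑ k ∈ Finset.range T, ‖∑ u, (P ^ k) z u • g u‖
        ≤ ∑ k ∈ Finset.range T, 2 * σ * ((1/2 : ℝ) * ∑ u, |(P ^ k) z u - dZ u|) :=
          Finset.sum_le_sum fun k _ => h1 k
      _ = 2 * σ * ∑ k ∈ Finset.range T, (1/2 : ℝ) * ∑ u, |(P ^ k) z u - dZ u| := by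
          rw [Finset.mul_sum]
      _ ≤ 2 * σ * C₁ := mul_le_mul_of_nonneg_left (hTV z T) (by linarith)
  -- total mass one
  have hm1 : ∀ s : ℕ, ∑ z, (μ (Z s ⁻¹' {z})).toReal = 1 := by
    intro s
    have h1 : ∑ z, μ (Z s ⁻¹' {z}) = μ (Z s ⁻¹' (Finset.univ : Finset S)) :=
      sum_measure_preimage_singleton _ (fun z _ => hZm s (measurableSet_singleton z))
    have h2 : (Z s ⁻¹' (Finset.univ : Finset S)) = Set.univ := by
      simp
    rw [h2] at h1
    rw [← ENNReal.toReal_sum (fun z _ => measure_ne_top μ _), h1, measure_univ,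
      ENNReal.toReal_one]
  -- per-s bound
  have hs_bound : ∀ s T : ℕ, ∑ k ∈ Finset.range T, c s (s + k) ≤ 2 * σ^2 * C₁ := by
    intro s T
    have e1 : ∀ k, c s (s + k)
        = ∑ z, (μ (Z s ⁻¹' {z})).toReal * ⟪g z, ∑ u, (P ^ k) z u • g u⟫ :=
      fun k => aux_key P F Z hadapted hmarkov g s k
    calc ∑ k ∈ Finset.range T, c s (s + k)
        = ∑ z, (μ (Z s ⁻¹' {z})).toReal
            * ∑ k ∈ Finset.range T, ⟪g z, ∑ u, (P ^ k) z u • g u⟫ := by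
          simp_rw [e1, Finset.mul_sum]
          exact Finset.sum_comm
      _ ≤ ∑ z, (μ (Z s ⁻¹' {z})).toReal * (2 * σ^2 * C₁) := by
          refine Finset.sum_le_sum fun z _ => ?_
          refine mul_le_mul_of_nonneg_left ?_ ENNReal.toReal_nonneg
          calc ∑ k ∈ Finset.range T, ⟪g z, ∑ u, (P ^ k) z u • g u⟫
              ≤ ∑ k ∈ Finset.range T, σ * ‖∑ u, (P ^ k) z u • g u‖ := by
                refine Finset.sum_le_sum fun k _ => ?_
                calc ⟪g z, ∑ u, (P ^ k) z u • g u⟫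
                    ≤ ‖g z‖ * ‖∑ u, (P ^ k) z u • g u‖ := real_inner_le_norm _ _
                  _ ≤ σ * ‖∑ u, (P ^ k) z u • g u‖ :=
                      mul_le_mul_of_nonneg_right (hgb z) (norm_nonneg _)
            _ = σ * ∑ k ∈ Finset.range T, ‖∑ u, (P ^ k) z u • g u‖ := by
                rw [Finset.mul_sum]
            _ ≤ σ * (2 * σ * C₁) :=
                mul_le_mul_of_nonneg_left (hW z T) hσ
            _ = 2 * σ^2 * C₁ := by ring
      _ = 2 * σ^2 * C₁ := by
          rw [← Finset.sum_mul, hm1 s, one_mul]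
  -- total = double sum
  have htotal : ∫ ω, ‖∑ t ∈ Finset.range N, g (Z t ω)‖^2 ∂μ
      = ∑ s ∈ Finset.range N, ∑ t ∈ Finset.range N, c s t := by
    have hpt : ∀ ω, ‖∑ t ∈ Finset.range N, g (Z t ω)‖^2
        = ∑ s ∈ Finset.range N, ∑ t ∈ Finset.range N, ⟪g (Z s ω), g (Z t ω)⟫ := by
      intro ω
      rw [← real_inner_self_eq_norm_sq, sum_inner]
      exact Finset.sum_congr rfl fun s _ => inner_sum _ _ _
    simp_rw [hpt]
    rw [integral_finset_sum _ (fun s _ => integrable_finset_sum _ (fun t _ => hcint s t))]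
    exact Finset.sum_congr rfl fun s _ =>
      integral_finset_sum _ (fun t _ => hcint s t)
  -- triangle bound
  set A : ℝ := ∑ s ∈ Finset.range N, ∑ t ∈ Finset.Ico s N, c s t with hA
  have hAbound : A ≤ N * (2 * σ^2 * C₁) := by
    rw [hA]
    calc ∑ s ∈ Finset.range N, ∑ t ∈ Finset.Ico s N, c s t
        = ∑ s ∈ Finset.range N, ∑ k ∈ Finset.range (N - s), c s (s + k) := by
          refine Finset.sum_congr rfl fun s _ => ?_
          rw [Finset.sum_Ico_eq_sum_range]
      _ ≤ ∑ s ∈ Finset.range N, 2 * σ^2 * C₁ :=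
          Finset.sum_le_sum fun s _ => hs_bound s (N - s)
      _ = N * (2 * σ^2 * C₁) := by
          rw [Finset.sum_const, Finset.card_range, nsmul_eq_mul]
  have htri : ∑ s ∈ Finset.range N, ∑ t ∈ Finset.range N, c s t ≤ 2 * A := by
    have hsplit : ∀ s ∈ Finset.range N,
        ∑ t ∈ Finset.range N, c s t
          = ∑ t ∈ Finset.range (s+1), c s t + ∑ t ∈ Finset.Ico (s+1) N, c s t := by
      intro s hs
      rw [Finset.mem_range] at hs
      rw [Finset.range_eq_Ico, Finset.range_eq_Ico]
      exact (Finset.sum_Ico_consecutive (c s) (Nat.zero_le (s+1)) hs).symm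
    rw [Finset.sum_congr rfl hsplit, Finset.sum_add_distrib]
    have hpart1 : ∑ s ∈ Finset.range N, ∑ t ∈ Finset.range (s+1), c s t = A := by
      have := Finset.sum_Ico_Ico_comm 0 N (fun i j => c j i)
      simp only [← Finset.range_eq_Ico] at this
      rw [← this, hA]
      refine Finset.sum_congr rfl fun s _ => ?_
      refine Finset.sum_congr rfl fun t _ => hcsymm t s
    have hpart2 : ∑ s ∈ Finset.range N, ∑ t ∈ Finset.Ico (s+1) N, c s t ≤ A := by
      rw [hA]
      refine Finset.sum_le_sum fun s hs => ?_
      refine Finset.sum_le_sum_of_subset_of_nonneg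
        (Finset.Ico_subset_Ico (Nat.le_succ s) le_rfl) fun t ht hts => ?_
      have : t = s := by
        rw [Finset.mem_Ico] at ht
        by_contra hne
        exact hts (Finset.mem_Ico.mpr ⟨Nat.lt_of_le_of_ne ht.1 (Ne.symm hne), ht.2⟩)
      rw [this]; exact hcdiag s
    linarith
  -- conclude
  have hLHS : ∫ ω, ‖(N:ℝ)⁻¹ • ∑ t ∈ Finset.range N, g (Z t ω)‖^2 ∂μ
      = ((N:ℝ)⁻¹)^2 * ∫ ω, ‖∑ t ∈ Finset.range N, g (Z t ω)‖^2 ∂μ := by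
    rw [← integral_const_mul]
    refine integral_congr_ae (ae_of_all _ fun ω => ?_)
    simp only [norm_smul, Real.norm_eq_abs,
      abs_of_nonneg (le_of_lt (inv_pos.mpr hNpos)), mul_pow]
  rw [hLHS, htotal]
  have hfinal : ((N:ℝ)⁻¹)^2 * (2 * A) ≤ 16 * C₁^2 * σ^2 / N := by
    have h1 : ((N:ℝ)⁻¹)^2 * (2 * A) ≤ ((N:ℝ)⁻¹)^2 * (2 * (N * (2 * σ^2 * C₁))) := by
      refine mul_le_mul_of_nonneg_left (by linarith) (by positivity)
    have h2 : ((N:ℝ)⁻¹)^2 * (2 * (N * (2 * σ^2 * C₁))) = 4 * σ^2 * C₁ / N := by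
      field_simp; ring
    have h3 : 4 * σ^2 * C₁ / N ≤ 16 * C₁^2 * σ^2 / N := by
      rw [div_le_div_iff₀ hNpos hNpos]
      have key : 4 * C₁ ≤ 16 * C₁^2 := by nlinarith
      nlinarith [mul_nonneg (sq_nonneg σ) hNpos.le, key]
    linarith
  calc ((N:ℝ)⁻¹)^2 * ∑ s ∈ Finset.range N, ∑ t ∈ Finset.range N, c s t
      ≤ ((N:ℝ)⁻¹)^2 * (2 * A) :=
        mul_le_mul_of_nonneg_left htri (by positivity)
    _ ≤ 16 * C₁^2 * σ^2 / N := hfinal
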